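/- Let A be a symmetric n×n real matrix with nonnegative entries having exactly one positive eigenvalue (counted with multiplicity), and let d_1, ..., d_n be real numbers with 0 ≤ d_i ≤ A_{ii} for all i. Then the matrix A' = A − Diag(d_1, ..., d_n) is either the zero matrix or has exactly one positive eigenvalue. -/

import Mathlib

open Matrix Finset

lemma quad_eig {n : ℕ} (M : Matrix (Fin n) (Fin n) ℝ) (hM : M.IsHermitian) (x : Fin n → ℝ) :
    x ⬝ᵥ (M *ᵥ x) =
      ∑ i, hM.eigenvalues i * ((star (hM.eigenvectorUnitary : Matrix (Fin n) (Fin n) ℝ) *ᵥ x) i)^2 := by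
  have hstar : star (hM.eigenvectorUnitary : Matrix (Fin n) (Fin n) ℝ)
      = (hM.eigenvectorUnitary : Matrix (Fin n) (Fin n) ℝ)ᵀ := by
    ext i j; simp [star_apply, conjTranspose_apply]
  conv_lhs => rw [hM.spectral_theorem, Unitary.conjStarAlgAut_apply]
  rw [← mulVec_mulVec, ← mulVec_mulVec, dotProduct_mulVec x, ← mulVec_transpose, ← hstar]
  simp [dotProduct, mulVec_diagonal, pow_two]
  exact Finset.sum_congr rfl fun i _ => by ring

noncomputable def coordMap {n : ℕ} (B : Matrix (Fin n) (Fin n) ℝ) (s : Finset (Fin n)) :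
    (Fin n → ℝ) →ₗ[ℝ] (s → ℝ) :=
  (LinearMap.funLeft ℝ ℝ (Subtype.val)) ∘ₗ B.mulVecLin

lemma mem_ker_coordMap {n : ℕ} (B : Matrix (Fin n) (Fin n) ℝ) (s : Finset (Fin n)) (x : Fin n → ℝ) :
    x ∈ LinearMap.ker (coordMap B s) ↔ ∀ j ∈ s, (B *ᵥ x) j = 0 := by
  simp [coordMap, LinearMap.mem_ker, funext_iff, LinearMap.funLeft, Subtype.forall]

lemma coordMap_ker_finrank {n : ℕ} (B : Matrix (Fin n) (Fin n) ℝ) (s : Finset (Fin n)) :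
    n ≤ Module.finrank ℝ (LinearMap.ker (coordMap B s)) + s.card := by
  have h1 := (coordMap B s).finrank_range_add_finrank_ker
  have h2 : Module.finrank ℝ (LinearMap.range (coordMap B s)) ≤ s.card := by
    have := Submodule.finrank_le (LinearMap.range (coordMap B s))
    simpa [Module.finrank_pi, Fintype.card_coe] using this
  have h3 : Module.finrank ℝ (Fin n → ℝ) = n := by simp
  omega

lemma exists_inf_ne_zero {n : ℕ} (W₁ W₂ : Submodule ℝ (Fin n → ℝ))
    (h : n < Module.finrank ℝ W₁ + Module.finrank ℝ W₂) :
    ∃ x ∈ W₁ ⊓ W₂, x ≠ 0 := by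
  have h1 := Submodule.finrank_sup_add_finrank_inf_eq W₁ W₂
  have h2 : Module.finrank ℝ (W₁ ⊔ W₂ : Submodule ℝ (Fin n → ℝ)) ≤ n := by
    have := Submodule.finrank_le (W₁ ⊔ W₂); simpa using this
  have h3 : 0 < Module.finrank ℝ (W₁ ⊓ W₂ : Submodule ℝ (Fin n → ℝ)) := by omega
  rw [← Submodule.ne_bot_iff]
  intro hb
  rw [hb, finrank_bot] at h3
  exact lt_irrefl 0 h3

lemma single_quad {n : ℕ} (M : Matrix (Fin n) (Fin n) ℝ) (i j : Fin n) (c e : ℝ) :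
    (Pi.single i c) ⬝ᵥ (M *ᵥ Pi.single j e) = c * M i j * e := by
  simp [mulVec_single, dotProduct, Pi.single_apply]
  ring

theorem stmt12 (n : ℕ) (A : Matrix (Fin n) (Fin n) ℝ) (hA : A.IsHermitian)
    (hpos : ∀ i j, 0 ≤ A i j)
    (hone : (Finset.univ.filter (fun i => 0 < hA.eigenvalues i)).card = 1)
    (d : Fin n → ℝ) (hd : ∀ i, 0 ≤ d i ∧ d i ≤ A i i)
    (hA' : (A - Matrix.diagonal d).IsHermitian) :
    A - Matrix.diagonal d = 0 ∨
      (Finset.univ.filter (fun i => 0 < hA'.eigenvalues i)).card = 1 := by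
  by_cases h0 : A - Matrix.diagonal d = 0
  · exact Or.inl h0
  right
  set A' := A - Matrix.diagonal d with hA'def
  -- quadratic form relation
  have hq : ∀ x : Fin n → ℝ, x ⬝ᵥ (A' *ᵥ x) = x ⬝ᵥ (A *ᵥ x) - ∑ i, d i * (x i)^2 := by
    intro x
    rw [hA'def, sub_mulVec, dotProduct_sub]
    congr 1
    simp [dotProduct, mulVec_diagonal, pow_two]
    exact Finset.sum_congr rfl fun i _ => by ring
  have hdnn : ∀ x : Fin n → ℝ, 0 ≤ ∑ i, d i * (x i)^2 := fun x =>
    Finset.sum_nonneg fun i _ => mul_nonneg (hd i).1 (sq_nonneg _)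
  set S := (Finset.univ.filter (fun i => 0 < hA'.eigenvalues i)) with hS
  -- S is nonempty
  have hcard0 : S.card ≠ 0 := by
    intro hc
    have hemp : ∀ i, ¬ 0 < hA'.eigenvalues i := by
      intro i hi
      have : i ∈ S := by simp [hS, hi]
      simp [Finset.card_eq_zero.mp hc] at this
    have hneg : ∀ x : Fin n → ℝ, x ⬝ᵥ (A' *ᵥ x) ≤ 0 := by
      intro x
      rw [quad_eig A' hA' x]
      exact Finset.sum_nonpos fun i _ =>
        mul_nonpos_of_nonpos_of_nonneg (le_of_not_gt (hemp i)) (sq_nonneg _)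
    have hdiag : ∀ i, A' i i = 0 := by
      intro i
      have h1 := hneg (Pi.single i 1)
      rw [single_quad] at h1
      have h2 : 0 ≤ A' i i := by
        have := (hd i).2
        simp [hA'def, Matrix.sub_apply, Matrix.diagonal_apply_eq]
        linarith
      linarith [h1, h2]
    apply h0
    ext i j
    by_cases hij : i = j
    · subst hij; simpa using hdiag i
    · have hsym : A' j i = A' i j := by
        have := hA'.apply i j
        simpa using this
      have key : ∀ t : ℝ, 2 * t * A' i j ≤ 0 := by
        intro t
        have h1 := hneg (Pi.single i t + Pi.single j 1)
        rw [mulVec_add, dotProduct_add, add_dotProduct, add_dotProduct] at h1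
        rw [single_quad, single_quad, single_quad, single_quad] at h1
        rw [hdiag i, hdiag j, hsym] at h1
        nlinarith [h1]
      have k1 := key 1
      have k2 := key (-1)
      have : A' i j = 0 := by linarith
      simpa using this
  -- S has at most one element
  have hcard2 : ¬ 2 ≤ S.card := by
    intro hge2
    set P := (Finset.univ.filter (fun i => 0 < hA.eigenvalues i)) with hP
    set U := (hA.eigenvectorUnitary : Matrix (Fin n) (Fin n) ℝ) with hU
    set U' := (hA'.eigenvectorUnitary : Matrix (Fin n) (Fin n) ℝ) with hU'
    set W₁ := LinearMap.ker (coordMap (star U) P) with hW₁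
    set W₂ := LinearMap.ker (coordMap (star U') Sᶜ) with hW₂
    have hSn : S.card ≤ n := by
      have := Finset.card_le_univ S
      simpa using this
    have hf1 := coordMap_ker_finrank (star U) P
    have hf2 := coordMap_ker_finrank (star U') Sᶜ
    have hScompl : Sᶜ.card = n - S.card := by
      rw [Finset.card_compl]; simp
    rw [← hW₁] at hf1
    rw [← hW₂] at hf2
    obtain ⟨x, hx, hxne⟩ : ∃ x ∈ W₁ ⊓ W₂, x ≠ 0 := by
      apply exists_inf_ne_zero
      rw [hone] at hf1
      rw [hScompl] at hf2
      omega
    obtain ⟨hx1, hx2⟩ := Submodule.mem_inf.mp hx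
    -- q_A x ≤ 0
    have hqA : x ⬝ᵥ (A *ᵥ x) ≤ 0 := by
      rw [quad_eig A hA x]
      apply Finset.sum_nonpos
      intro i _
      by_cases hi : 0 < hA.eigenvalues i
      · have hyi : (star U *ᵥ x) i = 0 :=
          (mem_ker_coordMap _ _ _).mp hx1 i (by simp [hP, hi])
        rw [hyi]; simp
      · exact mul_nonpos_of_nonpos_of_nonneg (le_of_not_gt hi) (sq_nonneg _)
    -- q_A' x > 0
    have hy'ne : star U' *ᵥ x ≠ 0 := by
      intro hy
      apply hxne
      have hUU : U' * star U' = 1 := (Matrix.mem_unitaryGroup_iff).mp hA'.eigenvectorUnitary.2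
      calc x = (U' * star U') *ᵥ x := by rw [hUU, one_mulVec]
        _ = U' *ᵥ (star U' *ᵥ x) := by rw [mulVec_mulVec]
        _ = 0 := by rw [hy, mulVec_zero]
    obtain ⟨k, hk0⟩ := Function.ne_iff.mp hy'ne
    have hk : (star U' *ᵥ x) k ≠ 0 := by simpa using hk0
    have hkS : k ∈ S := by
      by_contra hkS
      exact hk ((mem_ker_coordMap _ _ _).mp hx2 k (Finset.mem_compl.mpr hkS))
    have hqA' : 0 < x ⬝ᵥ (A' *ᵥ x) := by
      rw [quad_eig A' hA' x]
      refine Finset.sum_pos' (fun i _ => ?_) ⟨k, Finset.mem_univ k, ?_⟩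
      ·
        by_cases hi : i ∈ S
        · have : 0 < hA'.eigenvalues i := by simpa [hS] using hi
          exact mul_nonneg this.le (sq_nonneg _)
        · have : (star U' *ᵥ x) i = 0 :=
            (mem_ker_coordMap _ _ _).mp hx2 i (Finset.mem_compl.mpr hi)
          rw [this]; simp
      · have hlam : 0 < hA'.eigenvalues k := by simpa [hS] using hkS
        have hsq : (0:ℝ) < ((star U' *ᵥ x) k)^2 := by positivity
        exact mul_pos hlam hsq
    have := hq x
    have := hdnn x
    linarith
  omega
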